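/- With A the matrix indexed by subsets of [n-1] defined by A_{ST} = #{w ∈ S_n : [n-1]\S ⊆ C(w) and T ⊆ D(w)}, D the diagonal matrix with D_{SS} = η([n-1]\S), and M the subset-containment matrix (M_{ST} = 1 iff T ⊆ S), we have A = D M D^{-1} as matrices over ℚ. -/

import Mathlib

open Finset

/-- The connectivity set of a word `w` of length `n+1` (0-based indices in `[n-1]` ≅ `Fin n`):
`i ∈ C(w)` iff `w j < w k` whenever `j ≤ i < k`. -/
def Cset {n : ℕ} {α : Type*} [LinearOrder α] (w : Fin (n+1) → α) : Finset (Fin n) :=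
  Finset.univ.filter (fun i => ∀ j k : Fin (n+1), (j : ℕ) ≤ (i : ℕ) → (i : ℕ) < (k : ℕ) → w j < w k)

/-- The descent set of a permutation of `[n]` (modelled on `Fin (n+1)`, 0-based). -/
def Dset {n : ℕ} (w : Equiv.Perm (Fin (n+1))) : Finset (Fin n) :=
  Finset.univ.filter (fun i => w i.succ < w i.castSucc)

/-- The list of gaps `i₁, i₂-i₁, …, n - i_k` determined by `S = {i₁ < … < i_k} ⊆ [n-1]`
(here the ambient set is `[n]` with `n+1` replaced appropriately: sets live in `Fin n`,
permutations act on `n+1` points). -/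
def gaps {n : ℕ} (S : Finset (Fin n)) : List ℕ :=
  let l := (S.sort (· ≤ ·)).map (fun i => (i : ℕ) + 1)
  List.zipWith (fun a b => b - a) (0 :: l) (l ++ [n+1])

/-- `η(S) = i₁!(i₂-i₁)!⋯(n-i_k)!`. -/
def eta {n : ℕ} (S : Finset (Fin n)) : ℕ := ((gaps S).map Nat.factorial).prod

/-- The number of inversions of a permutation. -/
def invNum {m : ℕ} (w : Equiv.Perm (Fin m)) : ℕ :=
  (Finset.univ.filter (fun p : Fin m × Fin m => p.1 < p.2 ∧ w p.2 < w p.1)).card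

/-- `z(T)`: sum of binomial coefficients `C(gap, 2)` over the gaps of the complement of `T`. -/
def zstat {n : ℕ} (T : Finset (Fin n)) : ℕ := ((gaps Tᶜ).map (fun a => a.choose 2)).sum

/-- The `q`-factorial `[j]!_q` in `ℤ[q]`. -/
noncomputable def qFact (j : ℕ) : Polynomial ℤ :=
  ∏ a ∈ Finset.range j, ∑ b ∈ Finset.range (a+1), Polynomial.X ^ b

/-- `η(S, q)`, the `q`-analogue of `η(S)`. -/
noncomputable def etaq {n : ℕ} (S : Finset (Fin n)) : Polynomial ℤ := ((gaps S).map qFact).prod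


/-- number of cuts strictly below position `j` -/
def cnt (K : Finset (Fin n)) (j : ℕ) : ℕ := (K.filter (fun i : Fin n => (i : ℕ) < j)).card

/-- `w` preserves the blocks determined by the cut set `K`. -/
def bpres (K : Finset (Fin n)) (w : Equiv.Perm (Fin (n+1))) : Prop :=
  ∀ j, cnt K ((w j : ℕ)) = cnt K (j : ℕ)

instance {n : ℕ} (K : Finset (Fin n)) (w : Equiv.Perm (Fin (n+1))) : Decidable (bpres K w) :=
  inferInstanceAs (Decidable (∀ j, cnt K ((w j : ℕ)) = cnt K (j : ℕ)))

lemma cnt_mono (K : Finset (Fin n)) {x j : ℕ} (h : x ≤ j) : cnt K x ≤ cnt K j :=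
  Finset.card_le_card (Finset.monotone_filter_right K (fun i _ hi => lt_of_lt_of_le hi h))

lemma cnt_le_card (K : Finset (Fin n)) (j : ℕ) : cnt K j ≤ K.card :=
  Finset.card_le_card (Finset.filter_subset _ _)

lemma cnt_split (K : Finset (Fin n)) {x j : ℕ} (h : x ≤ j) :
    cnt K j = cnt K x + (K.filter (fun i : Fin n => x ≤ (i : ℕ) ∧ (i : ℕ) < j)).card := by
  classical
  unfold cnt
  rw [← Finset.card_union_of_disjoint]
  · congr 1
    ext i
    simp only [Finset.mem_filter, Finset.mem_union]
    constructor
    · rintro ⟨hi, hij⟩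
      rcases lt_or_ge (i : ℕ) x with h'|h'
      · exact Or.inl ⟨hi, h'⟩
      · exact Or.inr ⟨hi, h', hij⟩
    · rintro (⟨hi, h'⟩|⟨hi, h1, h2⟩)
      · exact ⟨hi, lt_of_lt_of_le h' h⟩
      · exact ⟨hi, h2⟩
  · rw [Finset.disjoint_left]
    rintro i hi hi'
    simp only [Finset.mem_filter] at hi hi'
    exact absurd hi'.2.1 (not_le.2 hi.2)

lemma cnt_eq_iff_no_cut (K : Finset (Fin n)) {x j : ℕ} (h : x ≤ j) :
    cnt K x = cnt K j ↔ ∀ i ∈ K, ¬(x ≤ (i : ℕ) ∧ (i : ℕ) < j) := by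
  rw [cnt_split K h, left_eq_add, Finset.card_eq_zero, Finset.filter_eq_empty_iff]

lemma cnt_eq_of_subset {K' K : Finset (Fin n)} (hKK : K' ⊆ K) {x j : ℕ}
    (h : cnt K x = cnt K j) : cnt K' x = cnt K' j := by
  rcases le_total x j with hle|hle
  · rw [cnt_eq_iff_no_cut K' hle]
    rw [cnt_eq_iff_no_cut K hle] at h
    exact fun i hi => h i (hKK hi)
  · rw [eq_comm, cnt_eq_iff_no_cut K' hle]
    rw [eq_comm, cnt_eq_iff_no_cut K hle] at h
    exact fun i hi => h i (hKK hi)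

lemma cnt_succ_of_mem {K : Finset (Fin n)} {i : Fin n} (hi : i ∈ K) :
    cnt K ((i : ℕ) + 1) = cnt K (i : ℕ) + 1 := by
  rw [cnt_split K (Nat.le_succ _)]
  congr 1
  rw [Finset.card_eq_one]
  refine ⟨i, ?_⟩
  ext x
  simp only [Finset.mem_filter, Finset.mem_singleton]
  constructor
  · rintro ⟨hx, h1, h2⟩
    exact Fin.ext (le_antisymm (Nat.lt_succ_iff.1 h2) h1)
  · rintro rfl
    exact ⟨hi, le_refl _, Nat.lt_succ_self _⟩

lemma cnt_succ_of_not_mem {K : Finset (Fin n)} {i : Fin n} (hi : i ∉ K) :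
    cnt K ((i : ℕ) + 1) = cnt K (i : ℕ) := by
  symm
  rw [cnt_split K (Nat.le_succ _), left_eq_add, Finset.card_eq_zero,
    Finset.filter_eq_empty_iff]
  rintro x hx ⟨h1, h2⟩
  exact hi (by rwa [show i = x from Fin.ext (le_antisymm h1 (Nat.lt_succ_iff.1 h2))])


lemma lower_count {k : ℕ} (P : Fin k → Prop) [DecidablePred P]
    (hdc : ∀ s t : Fin k, s ≤ t → P t → P s) (s : Fin k) :
    P s ↔ (s : ℕ) < (Finset.univ.filter P).card := by
  constructor
  · intro hs
    have h1 : Finset.Iic s ⊆ Finset.univ.filter P := fun t ht => by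
      simp only [Finset.mem_filter, Finset.mem_univ, true_and]
      exact hdc t s (Finset.mem_Iic.1 ht) hs
    have := Finset.card_le_card h1
    rw [Fin.card_Iic] at this; omega
  · intro hs
    by_contra hP
    have h1 : Finset.univ.filter P ⊆ Finset.Iio s := by
      intro t ht
      simp only [Finset.mem_filter, Finset.mem_univ, true_and] at ht
      rw [Finset.mem_Iio]
      by_contra hts
      exact hP (hdc s t (not_lt.1 hts) ht)
    have := Finset.card_le_card h1
    rw [Fin.card_Iio] at this; omega

lemma cnt_eq_card_fin (K : Finset (Fin n)) (j : ℕ) :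
    cnt K j = (Finset.univ.filter
      (fun s : Fin K.card => ((K.orderEmbOfFin rfl s : Fin n) : ℕ) < j)).card := by
  apply Finset.card_bij (fun s _ => (K.orderIsoOfFin rfl).symm ⟨s, by
    exact (Finset.mem_filter.1 ‹s ∈ _›).1⟩)
  · intro a ha
    simp only [Finset.mem_filter, Finset.mem_univ, true_and]
    have : ((K.orderIsoOfFin rfl) ((K.orderIsoOfFin rfl).symm ⟨a, (Finset.mem_filter.1 ha).1⟩) : Fin n) = a := by
      rw [OrderIso.apply_symm_apply]
    rw [← Finset.coe_orderIsoOfFin_apply, this]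
    exact (Finset.mem_filter.1 ha).2
  · intro a1 h1 a2 h2 heq
    have := congrArg (K.orderIsoOfFin rfl) heq
    simp only [OrderIso.apply_symm_apply] at this
    exact Subtype.ext_iff.1 this
  · intro b hb
    simp only [Finset.mem_filter, Finset.mem_univ, true_and] at hb
    refine ⟨(K.orderEmbOfFin rfl b : Fin n), Finset.mem_filter.2 ⟨Finset.orderEmbOfFin_mem _ _ _, hb⟩, ?_⟩
    exact (OrderIso.symm_apply_eq _).2 (Subtype.ext (Finset.coe_orderIsoOfFin_apply K rfl b).symm)


lemma emb_lt_iff (K : Finset (Fin n)) (j : ℕ) {r : ℕ} (hr : r < K.card) :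
    ((K.orderEmbOfFin rfl ⟨r, hr⟩ : Fin n) : ℕ) < j ↔ r < cnt K j := by
  rw [cnt_eq_card_fin K j]
  exact lower_count (fun s : Fin K.card => ((K.orderEmbOfFin rfl s : Fin n) : ℕ) < j)
    (fun s t hst ht => lt_of_le_of_lt
      (by exact_mod_cast Fin.le_iff_val_le_val.1 ((K.orderEmbOfFin rfl).monotone hst)) ht) ⟨r, hr⟩

/-- The right endpoint (exclusive, shifted) of block `r`; also `lov K (r+1) = ent K r`. -/
def ent (K : Finset (Fin n)) (r : ℕ) : ℕ :=
  if h : r < K.card then ((K.orderEmbOfFin rfl ⟨r, h⟩ : Fin n) : ℕ) + 1 else n + 1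

/-- The left endpoint of block `r`. -/
def lov (K : Finset (Fin n)) : ℕ → ℕ
  | 0 => 0
  | s + 1 => ent K s

lemma ent_le (K : Finset (Fin n)) (r : ℕ) : ent K r ≤ n + 1 := by
  unfold ent
  split
  · exact Nat.succ_le_succ (Nat.le_of_lt_succ (Nat.lt_succ_of_lt (Fin.is_lt _)))
  · exact le_refl _

lemma lov_le_iff (K : Finset (Fin n)) {r : ℕ} (hr : r ≤ K.card) (j : ℕ) :
    lov K r ≤ j ↔ r ≤ cnt K j := by
  cases r with
  | zero => simp [lov]
  | succ s =>
      have hs : s < K.card := hr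
      rw [show lov K (s+1) = ent K s from rfl, ent, dif_pos hs]
      rw [Nat.succ_le_iff, Nat.succ_le_iff]
      exact emb_lt_iff K j hs

lemma lt_ent_iff (K : Finset (Fin n)) {r : ℕ} (hr : r ≤ K.card) {j : ℕ} (hj : j ≤ n) :
    j < ent K r ↔ cnt K j ≤ r := by
  rcases lt_or_eq_of_le hr with h | h
  · rw [ent, dif_pos h, Nat.lt_succ_iff, ← not_lt, ← not_lt, not_iff_not]
    exact emb_lt_iff K j h
  · subst h
    rw [ent, dif_neg (lt_irrefl _)]
    simp only [Nat.lt_succ_iff, hj, true_iff]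
    exact cnt_le_card K j

lemma cnt_eq_iff (K : Finset (Fin n)) {r : ℕ} (hr : r ≤ K.card) (j : Fin (n+1)) :
    cnt K (j : ℕ) = r ↔ lov K r ≤ (j : ℕ) ∧ (j : ℕ) < ent K r := by
  rw [lov_le_iff K hr, lt_ent_iff K hr (Nat.lt_succ_iff.1 j.is_lt)]
  omega

lemma fiber_card (K : Finset (Fin n)) {r : ℕ} (hr : r ≤ K.card) :
    (Finset.univ.filter (fun j : Fin (n+1) => cnt K (j : ℕ) = r)).card
      = ent K r - lov K r := by
  rw [← Nat.card_Ico (lov K r) (ent K r)]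
  refine Finset.card_nbij (fun j => (j : ℕ)) ?_ ?_ ?_
  · intro j hj
    simp only [Finset.mem_coe, Finset.mem_filter, Finset.mem_univ, true_and] at hj
    rw [Finset.mem_coe, Finset.mem_Ico]
    exact (cnt_eq_iff K hr j).1 hj
  · intro a _ b _ hab
    exact Fin.ext hab
  · intro x hx
    simp only [Finset.coe_Ico, Set.mem_Ico] at hx
    have hxn : x < n + 1 := lt_of_lt_of_le hx.2 (ent_le K r)
    refine ⟨⟨x, hxn⟩, ?_, rfl⟩
    simp only [Finset.coe_filter, Set.mem_setOf_eq, Finset.mem_univ, true_and]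
    exact (cnt_eq_iff K hr ⟨x, hxn⟩).2 ⟨hx.1, hx.2⟩

lemma flatMap_pure_val {m : ℕ} (l : List (Fin m)) :
    (l.flatMap fun a : Fin m => [(a : ℕ)]) = l.map Fin.val := by
  induction l with
  | nil => rfl
  | cons a t ih => rw [List.flatMap_cons, List.map_cons, ← ih]; rfl

lemma gaps_def (K : Finset (Fin n)) : gaps K =
    List.zipWith (fun a b => b - a)
      (0 :: (K.sort (· ≤ ·)).map (fun i : Fin n => (i : ℕ) + 1))
      ((K.sort (· ≤ ·)).map (fun i : Fin n => (i : ℕ) + 1) ++ [n+1]) := by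
  unfold gaps
  rw [show (do let a ← K.sort (· ≤ ·); pure ((a : ℕ)) : List ℕ)
      = (K.sort (· ≤ ·)).map Fin.val from flatMap_pure_val _, List.map_map]
  rfl

lemma gaps_length (K : Finset (Fin n)) : (gaps K).length = K.card + 1 := by
  rw [gaps_def, List.length_zipWith, List.length_cons, List.length_append, List.length_map,
    Finset.length_sort]
  simp

lemma gaps_get (K : Finset (Fin n)) {r : ℕ} (hr : r < (gaps K).length) :
    (gaps K)[r] = ent K r - lov K r := by
  have hk : r < K.card + 1 := by rwa [gaps_length] at hr
  have hl : ((K.sort (· ≤ ·)).map (fun i : Fin n => (i : ℕ) + 1)).length = K.card := by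
    rw [List.length_map, Finset.length_sort]
  have hent : ∀ (s : ℕ) (hs : s < K.card),
      ((K.sort (· ≤ ·)).map (fun i : Fin n => (i : ℕ) + 1))[s]'(by omega) = ent K s := by
    intro s hs
    rw [List.getElem_map, ent, dif_pos hs, Finset.orderEmbOfFin_apply]
    simp [Fin.getElem_fin]
  rw [List.getElem_of_eq (gaps_def K) hr, List.getElem_zipWith]
  congr 1
  · -- second list
    rcases lt_or_eq_of_le (Nat.lt_succ_iff.1 hk) with h | h
    · rw [List.getElem_append_left (by omega), hent r h]
    · subst h
      rw [List.getElem_append_right (by omega)]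
      simp only [hl, Nat.sub_self, List.getElem_singleton, ent, dif_neg (lt_irrefl _)]
  · -- first list
    cases r with
    | zero => rfl
    | succ s =>
        rw [List.getElem_cons_succ, hent s (by omega)]
        rfl

lemma eta_eq (K : Finset (Fin n)) :
    eta K = ∏ r ∈ Finset.range (K.card + 1), Nat.factorial (ent K r - lov K r) := by
  have hmap : (gaps K).map Nat.factorial
      = List.ofFn (fun i : Fin ((gaps K).length) => Nat.factorial ((gaps K).get i)) := by
    have h := (List.map_ofFn (f := (gaps K).get) (g := Nat.factorial)).symm
    rw [List.ofFn_get] at h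
    exact h.symm.trans (by rfl)
  have h1 : eta K = ∏ i : Fin ((gaps K).length), Nat.factorial ((gaps K).get i) := by
    rw [eta, hmap, List.prod_ofFn]
  rw [h1]
  have h2 : ∀ i : Fin ((gaps K).length),
      Nat.factorial ((gaps K).get i) = Nat.factorial (ent K (i : ℕ) - lov K (i : ℕ)) := by
    intro i
    rw [List.get_eq_getElem, gaps_get K i.is_lt]
  rw [Finset.prod_congr rfl (fun i _ => h2 i), ← gaps_length K]
  exact Fin.prod_univ_eq_prod_range (fun r => Nat.factorial (ent K r - lov K r)) ((gaps K).length)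

lemma card_bpres (K : Finset (Fin n)) :
    (Finset.univ.filter (fun w : Equiv.Perm (Fin (n+1)) => bpres K w)).card = eta K := by
  classical
  set f : Fin (n+1) → ℕ := fun j => cnt K (j : ℕ) with hf
  have h0 : (Finset.univ.filter (fun w : Equiv.Perm (Fin (n+1)) => bpres K w)).card
      = Fintype.card {w : Equiv.Perm (Fin (n+1)) // f ∘ w = f} := by
    rw [Fintype.card_subtype]
    apply congrArg
    apply Finset.filter_congr
    intro w _
    constructor
    · intro h; funext j; exact h j
    · intro h j; exact congrFun h j
  rw [h0, DomMulAct.stabilizer_card' f]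
  have hfib : ∀ r : ℕ, Fintype.card {a : Fin (n+1) // f a = r}
      = (Finset.univ.filter (fun j : Fin (n+1) => cnt K (j : ℕ) = r)).card := fun r =>
    Fintype.card_subtype _
  have himg : (Finset.univ.image f) ⊆ Finset.range (K.card + 1) := by
    intro r hr
    rcases Finset.mem_image.1 hr with ⟨j, _, rfl⟩
    exact Finset.mem_range.2 (Nat.lt_succ_of_le (cnt_le_card K _))
  rw [eta_eq K]
  calc ∏ r ∈ Finset.univ.image f, (Fintype.card {a : Fin (n+1) // f a = r}).factorial
      = ∏ r ∈ Finset.range (K.card + 1),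
          (Fintype.card {a : Fin (n+1) // f a = r}).factorial := by
        apply Finset.prod_subset himg
        intro r _ hr
        haveI : IsEmpty {a : Fin (n+1) // f a = r} := by
          constructor
          rintro ⟨a, ha⟩
          exact hr (Finset.mem_image.2 ⟨a, Finset.mem_univ a, ha⟩)
        rw [Fintype.card_eq_zero, Nat.factorial_zero]
    _ = ∏ r ∈ Finset.range (K.card + 1), Nat.factorial (ent K r - lov K r) := by
        apply Finset.prod_congr rfl
        intro r hr
        rw [hfib, fiber_card K (Nat.lt_succ_iff.1 (Finset.mem_range.1 hr))]

section bridge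

/-- If `w` maps the prefix `[0..i]` into itself, it maps the complement into the complement. -/
lemma upper (w : Equiv.Perm (Fin (n+1))) (i : Fin n)
    (h : ∀ j : Fin (n+1), (j : ℕ) ≤ (i : ℕ) → ((w j : ℕ) ≤ (i : ℕ))) :
    ∀ k : Fin (n+1), (i : ℕ) < (k : ℕ) → (i : ℕ) < ((w k : ℕ)) := by
  intro k hk
  by_contra hwk
  push_neg at hwk
  have hcard : (insert k (Finset.univ.filter (fun j : Fin (n+1) => (j : ℕ) ≤ (i : ℕ)))).card
      ≤ (Finset.univ.filter (fun j : Fin (n+1) => (j : ℕ) ≤ (i : ℕ))).card := by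
    apply Finset.card_le_card_of_injOn w
    · intro a ha
      simp only [Finset.mem_coe, Finset.mem_insert, Finset.mem_filter, Finset.mem_univ, true_and] at ha ⊢
      rcases ha with rfl | ha
      · exact hwk
      · exact h a ha
    · exact fun a _ b _ hab => w.injective hab
  rw [Finset.card_insert_of_notMem (by
    simp only [Finset.mem_filter, Finset.mem_univ, true_and]; omega)] at hcard
  omega

lemma mem_Cset_iff (w : Equiv.Perm (Fin (n+1))) (i : Fin n) :
    i ∈ Cset ⇑w ↔ ∀ j : Fin (n+1), (j : ℕ) ≤ (i : ℕ) → ((w j : ℕ) ≤ (i : ℕ)) := by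
  rw [Cset, Finset.mem_filter]
  simp only [Finset.mem_univ, true_and]
  constructor
  · intro h j hj
    by_contra hwj
    push_neg at hwj
    -- w maps {k > i} ∪ {j} injectively into {v > i}
    have hcard : (insert j (Finset.univ.filter (fun k : Fin (n+1) => (i : ℕ) < (k : ℕ)))).card
        ≤ (Finset.univ.filter (fun k : Fin (n+1) => (i : ℕ) < (k : ℕ))).card := by
      apply Finset.card_le_card_of_injOn w
      · intro a ha
        simp only [Finset.mem_coe, Finset.mem_insert, Finset.mem_filter, Finset.mem_univ, true_and] at ha ⊢
        rcases ha with rfl | ha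
        · exact hwj
        · have := h j a hj ha
          omega
      · exact fun a _ b _ hab => w.injective hab
    rw [Finset.card_insert_of_notMem (by
      simp only [Finset.mem_filter, Finset.mem_univ, true_and]; omega)] at hcard
    omega
  · intro h j k hj hk
    have h1 := h j hj
    have h2 := upper w i h k hk
    exact Fin.lt_iff_val_lt_val.2 (by omega)

lemma subset_Cset_iff (K : Finset (Fin n)) (w : Equiv.Perm (Fin (n+1))) :
    K ⊆ Cset ⇑w ↔ bpres K w := by
  constructor
  · intro h j
    unfold cnt
    congr 1
    apply Finset.filter_congr
    intro i hi
    have hpre := (mem_Cset_iff w i).1 (h hi)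
    constructor
    · intro hlt
      by_contra hji
      push_neg at hji
      exact absurd (hpre j (by omega)) (by omega)
    · intro hlt
      have := upper w i hpre j hlt
      omega
  · intro h i hi
    rw [mem_Cset_iff]
    intro j hj
    by_contra hwj
    push_neg at hwj
    have h1 : cnt K (j : ℕ) ≤ cnt K (i : ℕ) := cnt_mono K (by omega)
    have h2 : cnt K ((i : ℕ) + 1) ≤ cnt K ((w j : ℕ)) := cnt_mono K (by omega)
    have h3 := cnt_succ_of_mem hi
    have h4 := h j
    omega

lemma descent_antitone {K : Finset (Fin n)} {u : Equiv.Perm (Fin (n+1))}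
    (hd : ∀ i : Fin n, i ∉ K → u i.succ < u i.castSucc) :
    ∀ j k : Fin (n+1), j < k → cnt K (j : ℕ) = cnt K (k : ℕ) → u k < u j := by
  have hcons : ∀ j k : Fin (n+1), (k : ℕ) = (j : ℕ) + 1 → cnt K (j : ℕ) = cnt K (k : ℕ) →
      u k < u j := by
    intro j k hk hcnt
    have hjn : (j : ℕ) < n := by
      have := k.is_lt
      omega
    have hiv : ((⟨(j : ℕ), hjn⟩ : Fin n) : ℕ) = (j : ℕ) := rfl
    have hic : (⟨(j : ℕ), hjn⟩ : Fin n).castSucc = j := Fin.ext rfl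
    have his : (⟨(j : ℕ), hjn⟩ : Fin n).succ = k := Fin.ext (by simp [Fin.val_succ, hiv, hk])
    have hiK : (⟨(j : ℕ), hjn⟩ : Fin n) ∉ K := by
      intro hmem
      have h5 := cnt_succ_of_mem hmem
      rw [hiv] at h5
      rw [hk] at hcnt
      omega
    rw [← hic, ← his]
    exact hd _ hiK
  have key : ∀ d : ℕ, ∀ j k : Fin (n+1), (k : ℕ) = (j : ℕ) + d + 1 →
      cnt K (j : ℕ) = cnt K (k : ℕ) → u k < u j := by
    intro d
    induction d with
    | zero => exact fun j k hk hcnt => hcons j k hk hcnt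
    | succ d ih =>
        intro j k hk hcnt
        have hk'lt : (j : ℕ) + d + 1 < n + 1 := by
          have := k.is_lt
          omega
        have hk'v : ((⟨(j : ℕ) + d + 1, hk'lt⟩ : Fin (n+1)) : ℕ) = (j : ℕ) + d + 1 := rfl
        have ha := cnt_mono K (show (j : ℕ) ≤ (j : ℕ) + d + 1 by omega)
        have hb := cnt_mono K (show (j : ℕ) + d + 1 ≤ (k : ℕ) by omega)
        have h3 := ih j ⟨(j : ℕ) + d + 1, hk'lt⟩ (by rw [hk'v]) (by rw [hk'v]; omega)
        have h4 := hcons ⟨(j : ℕ) + d + 1, hk'lt⟩ k (by rw [hk'v]; omega) (by rw [hk'v]; omega)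
        exact lt_trans h4 h3
  intro j k hjk hcnt
  have : (k : ℕ) = (j : ℕ) + ((k : ℕ) - (j : ℕ) - 1) + 1 := by
    have := Fin.lt_iff_val_lt_val.1 hjk
    omega
  exact key _ j k this hcnt

end bridge
section sorter

/-- The `T`-block of position `j`. -/
def blk (K : Finset (Fin n)) (j : Fin (n+1)) : Finset (Fin (n+1)) :=
  Finset.univ.filter (fun x => cnt K (x : ℕ) = cnt K (j : ℕ))

lemma mem_blk_self (K : Finset (Fin n)) (j : Fin (n+1)) : j ∈ blk K j := by
  simp [blk]

lemma mem_blk_iff {K : Finset (Fin n)} {j x : Fin (n+1)} :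
    x ∈ blk K j ↔ cnt K (x : ℕ) = cnt K (j : ℕ) := by simp [blk]

lemma blk_eq_of_mem {K : Finset (Fin n)} {j x : Fin (n+1)} (h : x ∈ blk K j) :
    blk K x = blk K j := by
  rw [mem_blk_iff] at h
  unfold blk
  apply Finset.filter_congr
  intro y _
  rw [h]

/-- rank of `j` within its block. -/
def rnk (K : Finset (Fin n)) (j : Fin (n+1)) : ℕ := ((blk K j).filter (fun x => x < j)).card

lemma rnk_lt (K : Finset (Fin n)) (j : Fin (n+1)) : rnk K j < (blk K j).card := by
  apply Finset.card_lt_card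
  constructor
  · exact Finset.filter_subset _ _
  · intro hsub
    have := hsub (mem_blk_self K j)
    simp only [Finset.mem_filter] at this
    exact lt_irrefl j this.2

lemma rnk_strict {K : Finset (Fin n)} {x y : Fin (n+1)} (hxy : x < y)
    (hb : cnt K (x : ℕ) = cnt K (y : ℕ)) : rnk K x < rnk K y := by
  have hbe : blk K x = blk K y := blk_eq_of_mem (mem_blk_iff.2 hb)
  apply Finset.card_lt_card
  rw [hbe]
  constructor
  · intro z hz
    simp only [Finset.mem_filter] at hz ⊢
    exact ⟨hz.1, lt_trans hz.2 hxy⟩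
  · intro hsub
    have hx : x ∈ (blk K y).filter (fun z => z < y) := by
      simp only [Finset.mem_filter]
      exact ⟨hbe ▸ mem_blk_self K x, hxy⟩
    have := hsub hx
    simp only [Finset.mem_filter] at this
    exact lt_irrefl x this.2

/-- the `r`-th largest element of `B.image w` (0-indexed from the top). -/
noncomputable def pick (w : Equiv.Perm (Fin (n+1))) (B : Finset (Fin (n+1))) (r : ℕ) : Fin (n+1) :=
  if h : 0 < (B.image w).card then
    (B.image w).orderEmbOfFin rfl ⟨(B.image w).card - 1 - r, by omega⟩
  else ⟨0, Nat.succ_pos n⟩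

/-- The sorted (within each `K`-block, decreasing) version of `w`. -/
noncomputable def ufun (K : Finset (Fin n)) (w : Equiv.Perm (Fin (n+1))) (j : Fin (n+1)) : Fin (n+1) :=
  pick w (blk K j) (rnk K j)

lemma card_image_blk (K : Finset (Fin n)) (w : Equiv.Perm (Fin (n+1))) (j : Fin (n+1)) :
    ((blk K j).image w).card = (blk K j).card :=
  Finset.card_image_of_injective _ w.injective

lemma pick_mem {w : Equiv.Perm (Fin (n+1))} {B : Finset (Fin (n+1))} (hB : B.Nonempty)
    (r : ℕ) : pick w B r ∈ B.image w := by
  have h : 0 < (B.image w).card := by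
    rw [Finset.card_image_of_injective _ w.injective]
    exact Finset.card_pos.2 hB
  rw [pick, dif_pos h]
  exact Finset.orderEmbOfFin_mem _ _ _

lemma pick_strict {w : Equiv.Perm (Fin (n+1))} {B : Finset (Fin (n+1))} {r r' : ℕ}
    (hr' : r' < B.card) (hrr : r < r') : pick w B r' < pick w B r := by
  have hc : (B.image w).card = B.card := Finset.card_image_of_injective _ w.injective
  have h : 0 < (B.image w).card := by omega
  rw [pick, pick, dif_pos h, dif_pos h]
  apply (Finset.orderEmbOfFin _ _).strictMono
  rw [Fin.lt_iff_val_lt_val]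
  simp only
  omega

lemma ufun_mem (K : Finset (Fin n)) (w : Equiv.Perm (Fin (n+1))) (j : Fin (n+1)) :
    ufun K w j ∈ (blk K j).image w :=
  pick_mem ⟨j, mem_blk_self K j⟩ _

lemma ufun_antitone {K : Finset (Fin n)} (w : Equiv.Perm (Fin (n+1))) {x y : Fin (n+1)}
    (hxy : x < y) (hb : cnt K (x : ℕ) = cnt K (y : ℕ)) : ufun K w y < ufun K w x := by
  have hbe : blk K y = blk K x := blk_eq_of_mem (mem_blk_iff.2 hb.symm)
  rw [ufun, ufun, hbe]
  exact pick_strict (hbe ▸ rnk_lt K y) (rnk_strict hxy hb)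

lemma ufun_injective (K : Finset (Fin n)) (w : Equiv.Perm (Fin (n+1))) :
    Function.Injective (ufun K w) := by
  intro x y hxy
  by_contra hne
  rcases lt_or_gt_of_ne hne with h | h
  · -- x < y
    rcases eq_or_ne (cnt K (x : ℕ)) (cnt K (y : ℕ)) with hb | hb
    · exact absurd hxy (ne_of_gt (ufun_antitone w h hb))
    · have h1 := ufun_mem K w x
      have h2 := ufun_mem K w y
      rw [hxy] at h1
      rcases Finset.mem_image.1 h1 with ⟨a, ha, hwa⟩
      rcases Finset.mem_image.1 h2 with ⟨b, hb', hwb⟩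
      have : a = b := w.injective (hwa.trans hwb.symm)
      subst this
      rw [mem_blk_iff] at ha hb'
      exact hb (ha.symm.trans hb')
  · rcases eq_or_ne (cnt K (x : ℕ)) (cnt K (y : ℕ)) with hb | hb
    · exact absurd hxy.symm (ne_of_gt (ufun_antitone w h hb.symm))
    · have h1 := ufun_mem K w x
      have h2 := ufun_mem K w y
      rw [hxy] at h1
      rcases Finset.mem_image.1 h1 with ⟨a, ha, hwa⟩
      rcases Finset.mem_image.1 h2 with ⟨b, hb', hwb⟩
      have : a = b := w.injective (hwa.trans hwb.symm)
      subst this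
      rw [mem_blk_iff] at ha hb'
      exact hb (ha.symm.trans hb')

/-- the sorted permutation. -/
noncomputable def uperm (K : Finset (Fin n)) (w : Equiv.Perm (Fin (n+1))) : Equiv.Perm (Fin (n+1)) :=
  Equiv.ofBijective (ufun K w) (Finite.injective_iff_bijective.1 (ufun_injective K w))

lemma uperm_apply (K : Finset (Fin n)) (w : Equiv.Perm (Fin (n+1))) (j : Fin (n+1)) :
    uperm K w j = ufun K w j := rfl

/-- image of a block under `ufun` equals image under `w`. -/
lemma ufun_image_blk (K : Finset (Fin n)) (w : Equiv.Perm (Fin (n+1))) (j : Fin (n+1)) :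
    (blk K j).image (ufun K w) = (blk K j).image w := by
  apply Finset.eq_of_subset_of_card_le
  · intro z hz
    rcases Finset.mem_image.1 hz with ⟨x, hx, rfl⟩
    have : blk K x = blk K j := blk_eq_of_mem hx
    have h := ufun_mem K w x
    rwa [this] at h
  · rw [Finset.card_image_of_injective _ w.injective,
      Finset.card_image_of_injective _ (ufun_injective K w)]

/-- two strictly antitone functions on a finset with the same image agree. -/
lemma antitone_image_eq (B : Finset (Fin (n+1))) (f g : Fin (n+1) → Fin (n+1))
    (hf : ∀ x ∈ B, ∀ y ∈ B, x < y → f y < f x)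
    (hg : ∀ x ∈ B, ∀ y ∈ B, x < y → g y < g x)
    (him : B.image f = B.image g) : ∀ j ∈ B, f j = g j := by
  induction B using Finset.strongInductionOn with
  | _ B ih =>
    intro j hj
    have hne : B.Nonempty := ⟨j, hj⟩
    set j0 := B.min' hne with hj0
    have hj0B : j0 ∈ B := B.min'_mem hne
    have hmax : ∀ (h : Fin (n+1) → Fin (n+1)), (∀ x ∈ B, ∀ y ∈ B, x < y → h y < h x) →
        h j0 = (B.image h).max' (hne.image h) := by
      intro h hh
      apply le_antisymm
      · exact Finset.le_max' _ _ (Finset.mem_image_of_mem h hj0B)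
      · apply Finset.max'_le
        intro z hz
        rcases Finset.mem_image.1 hz with ⟨y, hy, rfl⟩
        rcases eq_or_ne y j0 with rfl | hne'
        · exact le_refl _
        · exact le_of_lt (hh j0 hj0B y hy (lt_of_le_of_ne (B.min'_le y hy) (Ne.symm hne')))
    have hmax'eq : ∀ {s t : Finset (Fin (n+1))} (h : s = t) (hs : s.Nonempty),
        s.max' hs = t.max' (h ▸ hs) := by
      intro s t h hs
      subst h
      rfl
    have hfg0 : f j0 = g j0 := by
      rw [hmax f hf, hmax g hg]
      exact hmax'eq him _
    rcases eq_or_ne j j0 with rfl | hjne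
    · exact hfg0
    · -- recurse on B.erase j0
      have hinjf : ∀ x ∈ B, ∀ y ∈ B, f x = f y → x = y := by
        intro x hx y hy hxy
        by_contra hne'
        rcases lt_or_gt_of_ne hne' with h | h
        · exact absurd hxy.symm (ne_of_lt (hf x hx y hy h))
        · exact absurd hxy (ne_of_lt (hf y hy x hx h))
      have hinjg : ∀ x ∈ B, ∀ y ∈ B, g x = g y → x = y := by
        intro x hx y hy hxy
        by_contra hne'
        rcases lt_or_gt_of_ne hne' with h | h
        · exact absurd hxy.symm (ne_of_lt (hg x hx y hy h))
        · exact absurd hxy (ne_of_lt (hg y hy x hx h))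
      have himage : ∀ (h : Fin (n+1) → Fin (n+1)),
          (∀ x ∈ B, ∀ y ∈ B, h x = h y → x = y) →
          (B.erase j0).image h = (B.image h).erase (h j0) := by
        intro h hinj
        ext z
        simp only [Finset.mem_image, Finset.mem_erase]
        constructor
        · rintro ⟨x, hx, rfl⟩
          exact ⟨fun heq => hx.1 (hinj x hx.2 j0 hj0B heq), x, hx.2, rfl⟩
        · rintro ⟨hzne, x, hx, rfl⟩
          exact ⟨x, ⟨fun heq => hzne (by rw [heq]), hx⟩, rfl⟩
      have him' : (B.erase j0).image f = (B.erase j0).image g := by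
        rw [himage f hinjf, himage g hinjg, him, hfg0]
      have hsub : B.erase j0 ⊂ B := Finset.erase_ssubset hj0B
      exact ih (B.erase j0) hsub
        (fun x hx y hy => hf x (Finset.mem_of_mem_erase hx) y (Finset.mem_of_mem_erase hy))
        (fun x hx y hy => hg x (Finset.mem_of_mem_erase hx) y (Finset.mem_of_mem_erase hy))
        him' j (Finset.mem_erase.2 ⟨hjne, hj⟩)

/-- the sorted permutation still preserves the coarser blocks. -/
lemma bpres_uperm {K' K : Finset (Fin n)} (hKK : K' ⊆ K) {w : Equiv.Perm (Fin (n+1))}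
    (hw : bpres K' w) : bpres K' (uperm K w) := by
  intro j
  rcases Finset.mem_image.1 (ufun_mem K w j) with ⟨a, ha, hwa⟩
  rw [uperm_apply, ← hwa]
  rw [mem_blk_iff] at ha
  exact (hw a).trans (cnt_eq_of_subset hKK ha)

/-- the sorted permutation has a descent at every non-cut. -/
lemma uperm_descent (K : Finset (Fin n)) (w : Equiv.Perm (Fin (n+1))) {i : Fin n}
    (hi : i ∉ K) : uperm K w i.succ < uperm K w i.castSucc := by
  rw [uperm_apply, uperm_apply]
  apply ufun_antitone
  · rw [Fin.lt_iff_val_lt_val, Fin.coe_castSucc, Fin.val_succ]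
    omega
  · have := cnt_succ_of_not_mem hi
    rw [Fin.coe_castSucc, Fin.val_succ]
    omega

/-- the quotient `v = u⁻¹ ∘ w` preserves the fine blocks. -/
lemma bpres_quot (K : Finset (Fin n)) (w : Equiv.Perm (Fin (n+1))) :
    bpres K (w.trans (uperm K w).symm) := by
  intro x
  have hwx : w x ∈ (blk K x).image (ufun K w) := by
    rw [ufun_image_blk]
    exact Finset.mem_image_of_mem w (mem_blk_self K x)
  rcases Finset.mem_image.1 hwx with ⟨a, ha, hua⟩
  have : (uperm K w).symm (w x) = a := by
    apply (uperm K w).injective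
    rw [Equiv.apply_symm_apply]
    exact hua.symm
  rw [Equiv.trans_apply, this]
  rw [mem_blk_iff] at ha
  exact ha

lemma quot_trans (K : Finset (Fin n)) (w : Equiv.Perm (Fin (n+1))) :
    (w.trans (uperm K w).symm).trans (uperm K w) = w := by
  ext x
  simp [Equiv.trans_apply]

/-- uniqueness: sorting `v.trans u` recovers `u` when `u` is already sorted. -/
lemma uperm_uniq {K : Finset (Fin n)} {u v : Equiv.Perm (Fin (n+1))}
    (hu : ∀ i : Fin n, i ∉ K → u i.succ < u i.castSucc) (hv : bpres K v) :
    uperm K (v.trans u) = u := by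
  apply Equiv.ext
  intro j
  set w := v.trans u with hw
  -- v maps each block onto itself
  have hvblk : ∀ j : Fin (n+1), (blk K j).image v = blk K j := by
    intro j
    apply Finset.eq_of_subset_of_card_le
    · intro z hz
      rcases Finset.mem_image.1 hz with ⟨x, hx, rfl⟩
      rw [mem_blk_iff] at hx ⊢
      exact (hv x).trans hx
    · rw [Finset.card_image_of_injective _ v.injective]
  have himw : (blk K j).image w = (blk K j).image u := by
    have : (blk K j).image w = ((blk K j).image v).image u := by
      rw [Finset.image_image]
      rfl
    rw [this, hvblk]
  have hantu : ∀ x ∈ blk K j, ∀ y ∈ blk K j, x < y → u y < u x := by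
    intro x hx y hy hxy
    rw [mem_blk_iff] at hx hy
    exact descent_antitone hu x y hxy (hx.trans hy.symm)
  have hantf : ∀ x ∈ blk K j, ∀ y ∈ blk K j, x < y → ufun K w y < ufun K w x := by
    intro x hx y hy hxy
    rw [mem_blk_iff] at hx hy
    exact ufun_antitone w hxy (hx.trans hy.symm)
  have him : (blk K j).image (ufun K w) = (blk K j).image u := by
    rw [ufun_image_blk, himw]
  exact antitone_image_eq (blk K j) (ufun K w) u hantf hantu him j (mem_blk_self K j)

end sorter

section main

lemma main2 {S T : Finset (Fin n)} (hTS : T ⊆ S) :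
    (Finset.univ.filter (fun w : Equiv.Perm (Fin (n+1)) => bpres Sᶜ w)).card
      = (Finset.univ.filter
          (fun u : Equiv.Perm (Fin (n+1)) => bpres Sᶜ u ∧ T ⊆ Dset u)).card
        * (Finset.univ.filter (fun v : Equiv.Perm (Fin (n+1)) => bpres Tᶜ v)).card := by
  classical
  have hK : Sᶜ ⊆ Tᶜ := Finset.compl_subset_compl.2 hTS
  have hmap : ∀ w ∈ Finset.univ.filter (fun w : Equiv.Perm (Fin (n+1)) => bpres Sᶜ w),
      uperm Tᶜ w ∈ Finset.univ.filter
        (fun u : Equiv.Perm (Fin (n+1)) => bpres Sᶜ u ∧ T ⊆ Dset u) := by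
    intro w hw
    simp only [Finset.mem_filter, Finset.mem_univ, true_and] at hw ⊢
    refine ⟨bpres_uperm hK hw, ?_⟩
    intro i hi
    rw [Dset, Finset.mem_filter]
    exact ⟨Finset.mem_univ _, uperm_descent Tᶜ w (by simp [Finset.mem_compl, hi])⟩
  rw [Finset.card_eq_sum_card_fiberwise hmap]
  have hfib : ∀ u ∈ Finset.univ.filter
      (fun u : Equiv.Perm (Fin (n+1)) => bpres Sᶜ u ∧ T ⊆ Dset u),
      ((Finset.univ.filter (fun w : Equiv.Perm (Fin (n+1)) => bpres Sᶜ w)).filter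
          (fun w => uperm Tᶜ w = u)).card
        = (Finset.univ.filter (fun v : Equiv.Perm (Fin (n+1)) => bpres Tᶜ v)).card := by
    intro u hu
    simp only [Finset.mem_filter, Finset.mem_univ, true_and] at hu
    obtain ⟨huS, huD⟩ := hu
    have hud : ∀ i : Fin n, i ∉ Tᶜ → u i.succ < u i.castSucc := by
      intro i hi
      have hiT : i ∈ T := by
        by_contra hiT
        exact hi (Finset.mem_compl.2 hiT)
      have h2 := huD hiT
      rw [Dset, Finset.mem_filter] at h2
      exact h2.2
    have hset : (Finset.univ.filter (fun w : Equiv.Perm (Fin (n+1)) => bpres Sᶜ w)).filter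
          (fun w => uperm Tᶜ w = u)
        = (Finset.univ.filter (fun v : Equiv.Perm (Fin (n+1)) => bpres Tᶜ v)).image
            (fun v => v.trans u) := by
      ext w
      simp only [Finset.mem_filter, Finset.mem_univ, true_and, Finset.mem_image]
      constructor
      · rintro ⟨hwS, hwF⟩
        refine ⟨w.trans (uperm Tᶜ w).symm, bpres_quot Tᶜ w, ?_⟩
        rw [← hwF]
        exact quot_trans Tᶜ w
      · rintro ⟨v, hv, rfl⟩
        constructor
        · intro x
          rw [Equiv.trans_apply]
          exact (huS (v x)).trans (cnt_eq_of_subset hK (hv x))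
        · exact uperm_uniq hud hv
    rw [hset, Finset.card_image_of_injective]
    intro v v' hvv
    have hvv' : v.trans u = v'.trans u := hvv
    apply Equiv.ext
    intro x
    apply u.injective
    rw [← Equiv.trans_apply, hvv', Equiv.trans_apply]
  rw [Finset.sum_congr rfl hfib, Finset.sum_const, smul_eq_mul]

lemma main3 {S T : Finset (Fin n)} (h : ¬ T ⊆ S) :
    Finset.univ.filter
      (fun w : Equiv.Perm (Fin (n+1)) => Sᶜ ⊆ Cset ⇑w ∧ T ⊆ Dset w) = ∅ := by
  rw [Finset.filter_eq_empty_iff]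
  rintro w _ ⟨hC, hD⟩
  obtain ⟨i, hiT, hiS⟩ := Finset.not_subset.1 h
  have h1 : i ∈ Cset ⇑w := hC (Finset.mem_compl.2 hiS)
  have h2 := hD hiT
  rw [Cset, Finset.mem_filter] at h1
  rw [Dset, Finset.mem_filter] at h2
  have h3 := h1.2 i.castSucc i.succ (le_of_eq (Fin.coe_castSucc i))
    (by rw [Fin.val_succ]; omega)
  exact absurd h2.2 (not_lt.2 (le_of_lt h3))

lemma eta_pos (K : Finset (Fin n)) : 0 < eta K := by
  rw [eta]
  apply List.prod_pos
  intro a ha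
  rcases List.mem_map.1 ha with ⟨b, _, rfl⟩
  exact Nat.factorial_pos b

end main

/-- `A = D M D⁻¹` over `ℚ`, where `A_{ST}` counts permutations with `[n-1]\S ⊆ C(w)` and
`T ⊆ D(w)`, `D` is diagonal with entries `η([n-1]\S)`, and `M_{ST} = [T ⊆ S]`. -/
theorem stmt7 (n : ℕ)
    (A : Matrix (Finset (Fin n)) (Finset (Fin n)) ℚ)
    (hA : ∀ S T, A S T = (Finset.univ.filter
        (fun w : Equiv.Perm (Fin (n+1)) => Sᶜ ⊆ Cset ⇑w ∧ T ⊆ Dset w)).card)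
    (M : Matrix (Finset (Fin n)) (Finset (Fin n)) ℚ)
    (hM : ∀ S T, M S T = if T ⊆ S then 1 else 0)
    (D : Matrix (Finset (Fin n)) (Finset (Fin n)) ℚ)
    (hD : D = Matrix.diagonal (fun S => (eta Sᶜ : ℚ)))
    (Dinv : Matrix (Finset (Fin n)) (Finset (Fin n)) ℚ)
    (hDinv : Dinv = Matrix.diagonal (fun S => ((eta Sᶜ : ℚ))⁻¹)) :
    A = D * M * Dinv := by
  classical
  subst hD hDinv
  ext S T
  have hR : (Matrix.diagonal (fun S : Finset (Fin n) => (eta Sᶜ : ℚ)) * M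
        * Matrix.diagonal (fun S : Finset (Fin n) => ((eta Sᶜ : ℚ))⁻¹)) S T
      = (eta Sᶜ : ℚ) * M S T * ((eta Tᶜ : ℚ))⁻¹ := by
    rw [Matrix.mul_diagonal, Matrix.diagonal_mul]
  rw [hR, hA, hM]
  by_cases hTS : T ⊆ S
  · rw [if_pos hTS, mul_one]
    have hconv : Finset.univ.filter
          (fun w : Equiv.Perm (Fin (n+1)) => Sᶜ ⊆ Cset ⇑w ∧ T ⊆ Dset w)
        = Finset.univ.filter
          (fun w : Equiv.Perm (Fin (n+1)) => bpres Sᶜ w ∧ T ⊆ Dset w) := by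
      apply Finset.filter_congr
      intro w _
      rw [subset_Cset_iff]
    have hcount : eta (Sᶜ : Finset (Fin n))
        = (Finset.univ.filter
            (fun w : Equiv.Perm (Fin (n+1)) => bpres Sᶜ w ∧ T ⊆ Dset w)).card
          * eta (Tᶜ : Finset (Fin n)) := by
      rw [← card_bpres Sᶜ, ← card_bpres Tᶜ]
      exact main2 hTS
    rw [hconv]
    have hq : ((Finset.univ.filter
          (fun w : Equiv.Perm (Fin (n+1)) => bpres Sᶜ w ∧ T ⊆ Dset w)).card : ℚ)
          * (eta (Tᶜ : Finset (Fin n)) : ℚ) = (eta (Sᶜ : Finset (Fin n)) : ℚ) := by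
      exact_mod_cast (congrArg (fun x : ℕ => (x : ℚ)) hcount).symm
    have hTne : ((eta (Tᶜ : Finset (Fin n)) : ℚ)) ≠ 0 :=
      Nat.cast_ne_zero.2 (eta_pos (Tᶜ : Finset (Fin n))).ne'
    field_simp
    exact hq
  · rw [if_neg hTS, main3 hTS]
    simp
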